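/- arXiv:1605.04601 — 2 statements merged into one kernel-verified Lean document; each statement's English description precedes it below -/
import Mathlib

section
/- Let ρ and σ be density operators on a finite-dimensional Hilbert space, let 0 < α < 1, and suppose the purified distance between αρ and ασ (as subnormalized states) is at most ε. Then the purified distance between ρ and σ is at most ε·√(2/α). -/
open Matrix
open scoped ComplexOrder Classical

/-- Square root of a positive semidefinite matrix (junk value `0` otherwise). -/
noncomputable def matSqrt {n : Type*} [Fintype n] [DecidableEq n]
    (A : Matrix n n ℂ) : Matrix n n ℂ :=
  if h : A.PosSemidef then
    (h.1.eigenvectorUnitary : Matrix n n ℂ) *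
      diagonal (((↑) : ℝ → ℂ) ∘ (Real.sqrt ·) ∘ h.1.eigenvalues) *
      (star h.1.eigenvectorUnitary : Matrix n n ℂ)
  else 0

/-- Trace norm `‖M‖₁ = Tr √(Mᴴ M)`. -/
noncomputable def traceNorm {n : Type*} [Fintype n] [DecidableEq n]
    (M : Matrix n n ℂ) : ℝ :=
  (matSqrt (Mᴴ * M)).trace.re

/-- Fidelity `‖√ρ √σ‖₁`. -/
noncomputable def fidelity {n : Type*} [Fintype n] [DecidableEq n]
    (ρ σ : Matrix n n ℂ) : ℝ :=
  traceNorm (matSqrt ρ * matSqrt σ)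

/-- Generalized fidelity of subnormalized states. -/
noncomputable def genFidelity {n : Type*} [Fintype n] [DecidableEq n]
    (ρ σ : Matrix n n ℂ) : ℝ :=
  fidelity ρ σ + Real.sqrt ((1 - ρ.trace.re) * (1 - σ.trace.re))

/-- Purified distance `P(ρ,σ) = √(1 - F(ρ,σ)²)`. -/
noncomputable def purifiedDist {n : Type*} [Fintype n] [DecidableEq n]
    (ρ σ : Matrix n n ℂ) : ℝ :=
  Real.sqrt (1 - (genFidelity ρ σ) ^ 2)

lemma psd_smul {n : Type*} [Fintype n] [DecidableEq n] {A : Matrix n n ℂ} (hA : A.PosSemidef)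
    {c : ℝ} (hc : 0 ≤ c) : ((c:ℂ) • A).PosSemidef := by
  constructor
  · unfold Matrix.IsHermitian
    rw [conjTranspose_smul, hA.1.eq]; simp
  · intro x
    have h2 : (0:ℂ) ≤ (c:ℂ) := by exact_mod_cast hc
    exact (hA.smul h2).2 x

lemma matSqrt_eq_cfc {n : Type*} [Fintype n] [DecidableEq n] {A : Matrix n n ℂ}
    (hA : A.PosSemidef) : matSqrt A = cfc Real.sqrt A := by
  rw [matSqrt, dif_pos hA, hA.1.cfc_eq, IsHermitian.cfc, Unitary.conjStarAlgAut_apply]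
  rfl

lemma matSqrt_psd {n : Type*} [Fintype n] [DecidableEq n] {A : Matrix n n ℂ}
    (hA : A.PosSemidef) : (matSqrt A).PosSemidef := by
  rw [matSqrt, dif_pos hA, star_eq_conjTranspose]
  apply PosSemidef.mul_mul_conjTranspose_same
  rw [posSemidef_diagonal_iff]
  intro i
  simp [Real.sqrt_nonneg]

lemma matSqrt_smul {n : Type*} [Fintype n] [DecidableEq n] {A : Matrix n n ℂ}
    (hA : A.PosSemidef) {c : ℝ} (hc : 0 ≤ c) :
    matSqrt ((c:ℂ) • A) = (Real.sqrt c : ℂ) • matSqrt A := by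
  have hcA := psd_smul hA hc
  have hs : ∀ (d : ℝ) (M : Matrix n n ℂ), (d:ℂ) • M = d • M := by
    intro d M; ext i j; simp [Complex.real_smul]
  rw [matSqrt_eq_cfc hcA, matSqrt_eq_cfc hA, hs, hs]
  refine (cfc_comp_smul c Real.sqrt A (ha := hA.1)).symm.trans ?_
  rw [← cfc_const_mul (Real.sqrt c) Real.sqrt A]
  congr 1
  funext x
  simp [smul_eq_mul, Real.sqrt_mul hc]

lemma psd_trace_re_nonneg {n : Type*} [Fintype n] [DecidableEq n] {B : Matrix n n ℂ}
    (hB : B.PosSemidef) : 0 ≤ B.trace.re := by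
  exact (Complex.le_def.1 hB.trace_nonneg).1

lemma traceNorm_nonneg' {n : Type*} [Fintype n] [DecidableEq n] (M : Matrix n n ℂ) :
    0 ≤ traceNorm M := by
  rw [traceNorm]
  exact psd_trace_re_nonneg (matSqrt_psd (posSemidef_conjTranspose_mul_self M))

lemma traceNorm_smul' {n : Type*} [Fintype n] [DecidableEq n] (M : Matrix n n ℂ)
    {c : ℝ} (hc : 0 ≤ c) : traceNorm ((c:ℂ) • M) = c * traceNorm M := by
  have key : ((c:ℂ) • M)ᴴ * ((c:ℂ) • M) = ((c*c : ℝ) : ℂ) • (Mᴴ * M) := by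
    rw [conjTranspose_smul, smul_mul_smul_comm]
    push_cast
    simp [Complex.conj_ofReal]
  rw [traceNorm, traceNorm, key,
    matSqrt_smul (posSemidef_conjTranspose_mul_self M) (mul_nonneg hc hc),
    Real.sqrt_mul_self hc, trace_smul, smul_eq_mul, Complex.mul_re, Complex.ofReal_re,
    Complex.ofReal_im]
  ring

lemma real_smul_matrix {n : Type*} [Fintype n] [DecidableEq n] (c : ℝ) (M : Matrix n n ℂ) :
    c • M = (c : ℂ) • M := by
  ext i j
  simp [Complex.real_smul]

lemma fidelity_smul' {n : Type*} [Fintype n] [DecidableEq n] {ρ σ : Matrix n n ℂ}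
    (hρ : ρ.PosSemidef) (hσ : σ.PosSemidef) {c : ℝ} (hc : 0 ≤ c) :
    fidelity ((c:ℂ) • ρ) ((c:ℂ) • σ) = c * fidelity ρ σ := by
  rw [fidelity, matSqrt_smul hρ hc, matSqrt_smul hσ hc, smul_mul_smul_comm,
    ← Complex.ofReal_mul, Real.mul_self_sqrt hc, traceNorm_smul' _ hc, fidelity]

theorem purifiedDist_of_smul {n : Type*} [Fintype n] [DecidableEq n]
    (ρ σ : Matrix n n ℂ) (hρ : ρ.PosSemidef) (hρ1 : ρ.trace = 1)
    (hσ : σ.PosSemidef) (hσ1 : σ.trace = 1)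
    (α ε : ℝ) (hα0 : 0 < α) (hα1 : α < 1)
    (h : purifiedDist (α • ρ) (α • σ) ≤ ε) :
    purifiedDist ρ σ ≤ ε * Real.sqrt (2 / α) := by
  have hα0' : (0:ℝ) ≤ α := le_of_lt hα0
  set F := fidelity ρ σ with hF
  have hF0 : 0 ≤ F := traceNorm_nonneg' _
  -- genFidelity ρ σ = F
  have hg1 : genFidelity ρ σ = F := by
    rw [genFidelity, hρ1, hσ1]
    simp
    rfl
  -- traces of scaled states
  have htρ : (α • ρ).trace.re = α := by
    rw [real_smul_matrix, trace_smul, hρ1, smul_eq_mul, mul_one, Complex.ofReal_re]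
  have htσ : (α • σ).trace.re = α := by
    rw [real_smul_matrix, trace_smul, hσ1, smul_eq_mul, mul_one, Complex.ofReal_re]
  have hg2 : genFidelity (α • ρ) (α • σ) = α * F + (1 - α) := by
    rw [genFidelity, htρ, htσ, real_smul_matrix, real_smul_matrix,
      fidelity_smul' hρ hσ hα0', Real.sqrt_mul_self (by linarith)]
  set G := α * F + (1 - α) with hG
  have hε0 : 0 ≤ ε := le_trans (Real.sqrt_nonneg _) h
  have hG0 : 0 ≤ G := by nlinarith
  -- goal rewriting
  rw [purifiedDist, hg1]
  rw [purifiedDist, hg2] at h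
  by_cases hF1 : 1 ≤ F
  · have : 1 - F ^ 2 ≤ 0 := by nlinarith
    rw [Real.sqrt_eq_zero_of_nonpos this]
    positivity
  · push_neg at hF1
    have hG1 : G < 1 := by nlinarith
    have hGsq : 0 ≤ 1 - G ^ 2 := by nlinarith
    have h2 : 1 - G ^ 2 ≤ ε ^ 2 := by
      have := Real.sq_sqrt hGsq
      nlinarith [Real.sqrt_nonneg (1 - G ^ 2)]
    have hkey : 1 - F ^ 2 ≤ ε ^ 2 * (2 / α) := by
      have h3 : α * (1 - F) ≤ 1 - G ^ 2 := by nlinarith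
      have h4 : 1 - F ^ 2 ≤ 2 * (1 - F) := by nlinarith
      rw [div_eq_mul_inv]
      have h5 : α * (1 - F) ≤ ε ^ 2 := by linarith
      have h6 : 1 - F ≤ ε ^ 2 / α := by
        rw [le_div_iff₀ hα0]; nlinarith
      calc 1 - F ^ 2 ≤ 2 * (1 - F) := h4
        _ ≤ 2 * (ε ^ 2 / α) := by linarith
        _ = ε ^ 2 * (2 * α⁻¹) := by field_simp
    calc Real.sqrt (1 - F ^ 2) ≤ Real.sqrt (ε ^ 2 * (2 / α)) := Real.sqrt_le_sqrt hkey
      _ = ε * Real.sqrt (2 / α) := by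
          rw [Real.sqrt_mul (by positivity), Real.sqrt_sq hε0]
end

section
/- Let ρ_{AB} = ∑_j p(j) |j⟩⟨j|_A ⊗ σ^j_B be a classical-quantum state on H_A ⊗ H_B, where {|j⟩} is an orthonormal basis of H_A, p is a probability distribution, and each σ^j_B is a density operator. Then the max-information satisfies I_max(A:B)_ρ ≤ log₂(dim H_B). -/
open Matrix
open scoped ComplexOrder Classical Kronecker

/-- Partial trace over the second (right) tensor factor. -/
noncomputable def ptrR {m n : Type*} [Fintype m] [Fintype n]
    (ρ : Matrix (m × n) (m × n) ℂ) : Matrix m m ℂ :=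
  Matrix.of fun a a' => ∑ b, ρ (a, b) (a', b)

/-- Max-relative entropy `D_max(ρ‖σ) = inf {λ : ρ ≤ 2^λ σ}` (Löwner order). -/
noncomputable def dmax {n : Type*} [Fintype n] (ρ σ : Matrix n n ℂ) : ℝ :=
  sInf {l : ℝ | ((2 : ℝ) ^ l • σ - ρ).PosSemidef}

/-- Max-information `I_max(A:B)_ρ = inf_{σ_B} D_max(ρ_{AB} ‖ ρ_A ⊗ σ_B)`. -/
noncomputable def Imax {α β : Type*} [Fintype α] [Fintype β]
    (ρ : Matrix (α × β) (α × β) ℂ) : ℝ :=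
  sInf {x : ℝ | ∃ τ : Matrix β β ℂ, τ.PosSemidef ∧ τ.trace = 1 ∧
    x = dmax ρ (ptrR ρ ⊗ₖ τ)}

section helpers
variable {n m : Type*} [Fintype n] [Fintype m]

/-- real nonneg smul preserves PSD for complex matrices -/
lemma psd_rsmul {M : Matrix n n ℂ} (hM : M.PosSemidef) {c : ℝ} (hc : 0 ≤ c) :
    (c • M).PosSemidef := by
  have h : (c • M) = ((c : ℂ)) • M := by
    ext i j; simp [Matrix.smul_apply, Complex.real_smul]
  rw [h]
  refine Matrix.PosSemidef.of_dotProduct_mulVec_nonneg ?_ fun x => ?_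
  · unfold Matrix.IsHermitian
    rw [conjTranspose_smul, hM.1]
    congr 1
    simp [Complex.ext_iff]
  · rw [smul_mulVec, dotProduct_smul]
    exact mul_nonneg (by exact_mod_cast hc) (hM.dotProduct_mulVec_nonneg x)

lemma psd_sum {ι : Type*} (s : Finset ι) (f : ι → Matrix n n ℂ)
    (h : ∀ i ∈ s, (f i).PosSemidef) : (∑ i ∈ s, f i).PosSemidef := by
  classical
  induction s using Finset.induction with
  | empty => simpa using Matrix.PosSemidef.zero
  | insert _ _ hi ih =>
    rw [Finset.sum_insert hi]
    exact (h _ (Finset.mem_insert_self _ _)).add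
      (ih fun i hi' => h i (Finset.mem_insert_of_mem hi'))

lemma psd_kron {A : Matrix m m ℂ} {B : Matrix n n ℂ}
    (hA : A.PosSemidef) (hB : B.PosSemidef) : (A ⊗ₖ B).PosSemidef := by
  exact hA.kronecker hB

lemma psd_diag_nonneg {M : Matrix n n ℂ} (hM : M.PosSemidef) (i : n) : 0 ≤ M i i := by
  exact hM.diag_nonneg

lemma psd_trace_nonneg {M : Matrix n n ℂ} (hM : M.PosSemidef) : 0 ≤ M.trace :=
  Finset.sum_nonneg fun i _ => psd_diag_nonneg hM i

/-- PSD matrix with trace 1 satisfies σ ≤ 1. -/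
lemma one_sub_psd [DecidableEq n] {M : Matrix n n ℂ} (hM : M.PosSemidef)
    (ht : M.trace = 1) : (1 - M).PosSemidef := by
  have hH := hM.1
  set U : Matrix n n ℂ := (hH.eigenvectorUnitary : Matrix n n ℂ) with hUdef
  have hU1 : U * star U = 1 := Matrix.mem_unitaryGroup_iff.mp hH.eigenvectorUnitary.2
  have hU1' : star U * U = 1 := Matrix.mem_unitaryGroup_iff'.mp hH.eigenvectorUnitary.2
  have hspec := hH.spectral_theorem
  rw [Unitary.conjStarAlgAut_apply, ← hUdef] at hspec
  have htr : ∑ i, hH.eigenvalues i = 1 := by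
    have : M.trace = ∑ i, (hH.eigenvalues i : ℂ) := by
      conv_lhs => rw [hspec]
      rw [Matrix.trace_mul_cycle, hU1', one_mul, Matrix.trace_diagonal]
      simp
    rw [ht] at this
    exact_mod_cast this.symm
  have hle : ∀ i, hH.eigenvalues i ≤ 1 := by
    intro i
    rw [← htr]
    exact Finset.single_le_sum (fun j _ => hM.eigenvalues_nonneg j) (Finset.mem_univ i)
  have key : 1 - M = U * Matrix.diagonal (fun i => ((1 - hH.eigenvalues i : ℝ) : ℂ)) * Uᴴ := by
    have hd : Matrix.diagonal (fun i => ((1 - hH.eigenvalues i : ℝ) : ℂ)) =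
        1 - Matrix.diagonal (RCLike.ofReal ∘ hH.eigenvalues) := by
      ext i j
      by_cases h : i = j <;>
        simp [Matrix.diagonal, Matrix.one_apply, h, Complex.ofReal_sub]
    rw [hd, Matrix.mul_sub, Matrix.sub_mul, mul_one, ← Matrix.star_eq_conjTranspose, hU1, ← hspec]
  rw [key]
  have hdpsd : (Matrix.diagonal (fun i => ((1 - hH.eigenvalues i : ℝ) : ℂ))).PosSemidef := by
    apply Matrix.PosSemidef.diagonal
    intro i
    exact Complex.zero_le_real.mpr (by linarith [hle i])
  exact hdpsd.mul_mul_conjTranspose_same U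

end helpers

/-- For a classical-quantum state `ρ_{AB} = ∑ⱼ p(j) |j⟩⟨j| ⊗ σʲ`,
`I_max(A:B)_ρ ≤ log₂ dim(H_B)`. -/
theorem Imax_cq_le {α β : Type*} [Fintype α] [Fintype β] [DecidableEq α] [DecidableEq β]
    (p : α → ℝ) (hp : ∀ j, 0 ≤ p j) (hp1 : ∑ j, p j = 1)
    (σ : α → Matrix β β ℂ)
    (hσ : ∀ j, (σ j).PosSemidef ∧ (σ j).trace = 1) :
    Imax (∑ j, p j • (Matrix.single j j (1 : ℂ) ⊗ₖ σ j))
      ≤ Real.logb 2 (Fintype.card β) := by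
  classical
  set ρ : Matrix (α × β) (α × β) ℂ := ∑ j, p j • (Matrix.single j j (1 : ℂ) ⊗ₖ σ j)
    with hρ
  by_cases hβ : Nonempty β
  · -- main case
    have hd : 0 < Fintype.card β := Fintype.card_pos_iff.mpr hβ
    set d : ℕ := Fintype.card β with hddef
    have hdR : (0:ℝ) < (d:ℝ) := by exact_mod_cast hd
    -- the partial trace of ρ
    have hA : ptrR ρ = ∑ j, p j • Matrix.single j j (1:ℂ) := by
      ext a a'
      simp only [ptrR, Matrix.of_apply, hρ, Matrix.sum_apply, Matrix.smul_apply,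
        Matrix.kroneckerMap_apply]
      rw [Finset.sum_comm]
      refine Finset.sum_congr rfl fun j _ => ?_
      rw [← Finset.smul_sum, ← Finset.mul_sum,
        show ∑ b, σ j b b = 1 from (hσ j).2]
      simp
    -- trace of ρ is 1
    have htrρ : ρ.trace = 1 := by
      rw [hρ, Matrix.trace_sum]
      have : ∀ j, (p j • (Matrix.single j j (1:ℂ) ⊗ₖ σ j)).trace = (p j : ℂ) := by
        intro j
        rw [Matrix.trace_smul, Matrix.trace_kronecker, (hσ j).2, mul_one,
          Matrix.trace_single_eq_same]
        simp [Complex.real_smul]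
      rw [Finset.sum_congr rfl fun j _ => this j]
      exact_mod_cast congrArg (Complex.ofReal) hp1
    -- trace of ptrR ρ is 1
    have htrA : (ptrR ρ).trace = 1 := by
      rw [hA, Matrix.trace_sum]
      have : ∀ j, (p j • Matrix.single j j (1:ℂ)).trace = (p j : ℂ) := by
        intro j
        rw [Matrix.trace_smul, Matrix.trace_single_eq_same]
        simp [Complex.real_smul]
      rw [Finset.sum_congr rfl fun j _ => this j]
      exact_mod_cast congrArg (Complex.ofReal) hp1
    -- nonnegativity of dmax against any density operator
    have hnn : ∀ τ : Matrix β β ℂ, τ.trace = 1 → 0 ≤ dmax ρ (ptrR ρ ⊗ₖ τ) := by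
      intro τ htτ
      apply Real.sInf_nonneg
      intro l hl
      have hps : (((2:ℝ) ^ l) • (ptrR ρ ⊗ₖ τ) - ρ).PosSemidef := hl
      have htr0 : (0:ℂ) ≤ (((2:ℝ) ^ l) • (ptrR ρ ⊗ₖ τ) - ρ).trace := psd_trace_nonneg hps
      rw [Matrix.trace_sub, Matrix.trace_smul, Matrix.trace_kronecker, htrA, htτ, htrρ,
        one_mul] at htr0
      have h1 : (1:ℝ) ≤ (2:ℝ) ^ l := by
        have : (0:ℂ) ≤ ((((2:ℝ) ^ l - 1 : ℝ)) : ℂ) := by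
          convert htr0 using 1
          push_cast [Complex.real_smul]
          ring
        have := Complex.zero_le_real.mp this
        linarith
      by_contra hneg
      exact absurd (Real.rpow_lt_one_of_one_lt_of_neg one_lt_two (not_le.mp hneg))
        (not_lt.mpr h1)
    -- τ : the maximally mixed state
    set τ : Matrix β β ℂ := ((d:ℝ)⁻¹) • (1 : Matrix β β ℂ) with hτdef
    have hτpsd : τ.PosSemidef := psd_rsmul Matrix.PosSemidef.one (by positivity)
    have hτtr : τ.trace = 1 := by
      rw [hτdef, Matrix.trace_smul, Matrix.trace_one]
      simp only [Complex.real_smul]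
      push_cast
      field_simp
      rw [hddef]
    -- the lower bound for the Imax set
    have hbdd : BddBelow {x : ℝ | ∃ τ' : Matrix β β ℂ, τ'.PosSemidef ∧ τ'.trace = 1 ∧
        x = dmax ρ (ptrR ρ ⊗ₖ τ')} := by
      refine ⟨0, fun x hx => ?_⟩
      obtain ⟨τ', -, htτ', rfl⟩ := hx
      exact hnn τ' htτ'
    have hmem : dmax ρ (ptrR ρ ⊗ₖ τ) ∈ {x : ℝ | ∃ τ' : Matrix β β ℂ, τ'.PosSemidef ∧
        τ'.trace = 1 ∧ x = dmax ρ (ptrR ρ ⊗ₖ τ')} := ⟨τ, hτpsd, hτtr, rfl⟩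
    refine le_trans (csInf_le hbdd hmem) ?_
    -- now bound dmax itself
    have hpow : (2:ℝ) ^ Real.logb 2 (d:ℝ) = (d:ℝ) :=
      Real.rpow_logb (by norm_num) (by norm_num) hdR
    have hkey : (((2:ℝ) ^ Real.logb 2 (d:ℝ)) • (ptrR ρ ⊗ₖ τ) - ρ).PosSemidef := by
      rw [hpow, hτdef, Matrix.kronecker_smul, smul_smul,
        mul_inv_cancel₀ (ne_of_gt hdR), one_smul]
      have hsplit : ptrR ρ ⊗ₖ (1 : Matrix β β ℂ) - ρ =
          ∑ j, p j • (Matrix.single j j (1:ℂ) ⊗ₖ (1 - σ j)) := by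
        rw [hA, hρ]
        ext ⟨a, b⟩ ⟨a', b'⟩
        simp only [Matrix.sub_apply, Matrix.sum_apply, Matrix.smul_apply,
          Matrix.kroneckerMap_apply, Matrix.one_apply, Complex.real_smul,
          Finset.sum_mul, mul_sub]
        rw [← Finset.sum_sub_distrib]
        refine Finset.sum_congr rfl fun j _ => ?_
        by_cases h : b = b' <;> simp [h]
      rw [hsplit]
      refine psd_sum _ _ fun j _ => psd_rsmul (psd_kron ?_ (one_sub_psd (hσ j).1 (hσ j).2))
        (hp j)
      have hE : Matrix.single j j (1:ℂ) =
          (Matrix.single j j (1:ℂ))ᴴ * (Matrix.single j j (1:ℂ)) := by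
        have h1 : (Matrix.single j j (1:ℂ))ᴴ = Matrix.single j j (1:ℂ) := by
          ext a b
          simp only [Matrix.conjTranspose_apply, Matrix.single, Matrix.of_apply]
          by_cases h : a = j <;> by_cases h' : b = j <;> simp [h, h', and_comm]
        rw [h1, Matrix.single_mul_single_same, mul_one]
      rw [hE]
      exact Matrix.posSemidef_conjTranspose_mul_self _
    have hdmax : dmax ρ (ptrR ρ ⊗ₖ τ) ≤ Real.logb 2 (d:ℝ) := by
      apply csInf_le
      · refine ⟨0, fun l hl => ?_⟩
        have hps : (((2:ℝ) ^ l) • (ptrR ρ ⊗ₖ τ) - ρ).PosSemidef := hl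
        have htr0 : (0:ℂ) ≤ (((2:ℝ) ^ l) • (ptrR ρ ⊗ₖ τ) - ρ).trace := psd_trace_nonneg hps
        rw [Matrix.trace_sub, Matrix.trace_smul, Matrix.trace_kronecker, htrA, hτtr, htrρ,
          one_mul] at htr0
        have h1 : (1:ℝ) ≤ (2:ℝ) ^ l := by
          have : (0:ℂ) ≤ ((((2:ℝ) ^ l - 1 : ℝ)) : ℂ) := by
            convert htr0 using 1
            push_cast [Complex.real_smul]
            ring
          have := Complex.zero_le_real.mp this
          linarith
        by_contra hneg
        exact absurd (Real.rpow_lt_one_of_one_lt_of_neg one_lt_two (not_le.mp hneg))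
          (not_lt.mpr h1)
      · exact hkey
    exact hdmax
  · -- β empty
    haveI : IsEmpty β := not_nonempty_iff.mp hβ
    have hcard : Fintype.card β = 0 := Fintype.card_eq_zero
    have hset : {x : ℝ | ∃ τ : Matrix β β ℂ, τ.PosSemidef ∧ τ.trace = 1 ∧
        x = dmax ρ (ptrR ρ ⊗ₖ τ)} = ∅ := by
      ext x
      simp only [Set.mem_setOf_eq, Set.mem_empty_iff_false, iff_false]
      rintro ⟨τ, -, htr, -⟩
      have h0 : τ.trace = 0 := by simp [Matrix.trace]
      rw [h0] at htr
      exact one_ne_zero htr.symm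
    rw [Imax, hset, Real.sInf_empty, hcard]
    simp
end
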